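/- Let K be a finite set of nonnegative integers with 0 ∈ K and |K| ≥ 2 whose elements have greatest common divisor 1. Then K is b-arithmetic in ℤ (i.e. the system A(K) has a nontrivial bounded complex solution) if and only if the mask polynomial P_K(X) = ∑_{s ∈ K} X^s has a complex root of modulus 1. -/

import Mathlib

open Polynomial

/-- The shift endomorphism on two-sided complex sequences. -/
noncomputable def shiftE : Module.End ℂ (ℤ → ℂ) where
  toFun x := fun n => x (n + 1)
  map_add' _ _ := rfl
  map_smul' _ _ := rfl

lemma shiftE_apply (x : ℤ → ℂ) (n : ℤ) : shiftE x n = x (n + 1) := rfl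

lemma shiftE_pow (k : ℕ) (x : ℤ → ℂ) (n : ℤ) : (shiftE ^ k) x n = x (n + k) := by
  induction k generalizing n with
  | zero => simp
  | succ k ih =>
    rw [pow_succ', Module.End.mul_apply, shiftE_apply, ih]
    congr 1
    push_cast
    ring

lemma bounded_aeval (p : ℂ[X]) (x : ℤ → ℂ) (M : ℝ) (hM : ∀ n, ‖x n‖ ≤ M) :
    ∃ M', ∀ n, ‖(Polynomial.aeval shiftE p) x n‖ ≤ M' := by
  induction p using Polynomial.induction_on' with
  | add p q hp hq =>
    obtain ⟨Mp, hp⟩ := hp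
    obtain ⟨Mq, hq⟩ := hq
    refine ⟨Mp + Mq, fun n => ?_⟩
    rw [map_add]
    calc ‖(Polynomial.aeval shiftE p + Polynomial.aeval shiftE q) x n‖
        = ‖(Polynomial.aeval shiftE p) x n + (Polynomial.aeval shiftE q) x n‖ := rfl
      _ ≤ _ := (norm_add_le _ _).trans (add_le_add (hp n) (hq n))
  | monomial k a =>
    refine ⟨‖a‖ * M, fun n => ?_⟩
    rw [Polynomial.aeval_monomial, Module.End.mul_apply, Module.algebraMap_end_apply]
    have : (a • ((shiftE ^ k) x)) n = a * x (n + k) := by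
      simp [shiftE_pow]
    rw [this, norm_mul]
    exact mul_le_mul_of_nonneg_left (hM _) (norm_nonneg a)

lemma geom_iter (a : ℂ) (x : ℤ → ℂ) (hrel : ∀ n, x (n + 1) = a * x n) :
    ∀ (k : ℕ) (n : ℤ), x (n + k) = a ^ k * x n := by
  intro k
  induction k with
  | zero => simp
  | succ k ih =>
    intro n
    have h1 : (n + ((k : ℕ) + 1 : ℕ) : ℤ) = (n + k) + 1 := by push_cast; ring
    rw [h1, hrel, ih, pow_succ]
    ring

/-- A bounded two-sided geometric sequence with ratio of modulus ≠ 1 is zero. -/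
lemma geom_bounded_zero (a : ℂ) (ha : ‖a‖ ≠ 1) (x : ℤ → ℂ) (M : ℝ)
    (hM : ∀ n, ‖x n‖ ≤ M) (hrel : ∀ n, x (n + 1) = a * x n) : x = 0 := by
  have hiter := geom_iter a x hrel
  funext n
  show x n = 0
  have habs : ‖x n‖ ≤ 0 := by
    rcases lt_or_gt_of_ne ha with h | h
    · -- |a| < 1 : use x n = a^k * x (n-k)
      have key : ∀ k : ℕ, ‖x n‖ ≤ ‖a‖ ^ k * M := by
        intro k
        have h2 := hiter k (n - (k : ℤ))
        rw [(by ring : n - (k : ℤ) + (k : ℤ) = n)] at h2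
        rw [h2, norm_mul, norm_pow]
        exact mul_le_mul_of_nonneg_left (hM _) (pow_nonneg (norm_nonneg a) k)
      have ht : Filter.Tendsto (fun k : ℕ => ‖a‖ ^ k * M) Filter.atTop (nhds 0) := by
        simpa using (tendsto_pow_atTop_nhds_zero_of_lt_one (norm_nonneg a) h).mul_const M
      exact ge_of_tendsto' ht key
    · -- |a| > 1
      have hpos : ∀ k : ℕ, (0:ℝ) < ‖a‖ ^ k := fun k =>
        pow_pos (lt_trans one_pos h) k
      have key : ∀ k : ℕ, ‖x n‖ ≤ M * ((‖a‖)⁻¹) ^ k := by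
        intro k
        have h2 := hiter k n
        have h3 : ‖a‖ ^ k * ‖x n‖ ≤ M := by
          rw [← norm_pow, ← norm_mul, ← h2]; exact hM _
        rw [inv_pow, ← div_eq_mul_inv, le_div_iff₀ (hpos k)]
        calc ‖x n‖ * ‖a‖ ^ k
            = ‖a‖ ^ k * ‖x n‖ := by ring
          _ ≤ M := h3
      have ht : Filter.Tendsto (fun k : ℕ => M * ((‖a‖)⁻¹) ^ k)
          Filter.atTop (nhds 0) := by
        have hlt : (‖a‖)⁻¹ < 1 := inv_lt_one_of_one_lt₀ h
        simpa using (tendsto_pow_atTop_nhds_zero_of_lt_one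
          (inv_nonneg.mpr (norm_nonneg a)) hlt).const_mul M
      exact ge_of_tendsto' ht key
  exact norm_eq_zero.mp (le_antisymm habs (norm_nonneg _))

/-- Key lemma: a bounded sequence annihilated by a product of shift factors `S - a`
with all `|a| ≠ 1` is zero. -/
lemma kill (m : Multiset ℂ) (hm : ∀ z ∈ m, ‖z‖ ≠ 1) :
    ∀ x : ℤ → ℂ, (∃ M, ∀ n, ‖x n‖ ≤ M) →
      (Polynomial.aeval shiftE (m.map (fun z => X - C z)).prod) x = 0 → x = 0 := by
  induction m using Multiset.induction_on with
  | empty => intro x _ h; simpa using h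
  | cons a m ih =>
    rintro x ⟨M, hM⟩ hx
    have ha : ‖a‖ ≠ 1 := hm a (Multiset.mem_cons_self a m)
    set Q : ℂ[X] := (m.map (fun z => X - C z)).prod with hQ
    have hcons : ((a ::ₘ m).map (fun z => X - C z)).prod = (X - C a) * Q := by
      rw [Multiset.map_cons, Multiset.prod_cons]
    set w : ℤ → ℂ := (Polynomial.aeval shiftE (X - C a)) x with hw
    obtain ⟨M', hM'⟩ := bounded_aeval (X - C a) x M hM
    have hw0 : (Polynomial.aeval shiftE Q) w = 0 := by
      have h1 : (Polynomial.aeval shiftE Q) w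
          = (Polynomial.aeval shiftE ((X - C a) * Q)) x := by
        rw [mul_comm, map_mul, Module.End.mul_apply]
      rw [h1, ← hcons, hx]
    have hwz : w = 0 := ih (fun z hz => hm z (Multiset.mem_cons_of_mem hz)) w ⟨M', hM'⟩ hw0
    have hrel : ∀ n : ℤ, x (n + 1) = a * x n := by
      intro n
      have h2 : w n = 0 := by rw [hwz]; rfl
      have h3 : w n = x (n + 1) - a * x n := by
        rw [hw, map_sub, Polynomial.aeval_X, Polynomial.aeval_C]
        show shiftE x n - (algebraMap ℂ (Module.End ℂ (ℤ → ℂ)) a) x n = _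
        rw [Module.algebraMap_end_apply]
        rfl
      rw [h3] at h2
      exact sub_eq_zero.mp h2
    exact geom_bounded_zero a ha x M hM hrel

theorem stmt_2 (K : Finset ℕ) (h0 : 0 ∈ K) (hcard : 2 ≤ K.card) (hgcd : K.gcd id = 1) :
    (∃ x : ℤ → ℂ, x ≠ 0 ∧ (∃ M : ℝ, ∀ n : ℤ, ‖x n‖ ≤ M) ∧
        ∀ n : ℤ, ∑ s ∈ K, x (n + (s : ℤ)) = 0) ↔
      ∃ z : ℂ, ‖z‖ = 1 ∧ ∑ s ∈ K, z ^ s = 0 := by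
  constructor
  · rintro ⟨x, hx0, ⟨M, hM⟩, hrec⟩
    by_contra hroot
    push_neg at hroot
    set P : ℂ[X] := ∑ s ∈ K, (X : ℂ[X]) ^ s with hP
    have hPeval : ∀ z : ℂ, P.eval z = ∑ s ∈ K, z ^ s := by
      intro z
      rw [hP, Polynomial.eval_finset_sum]
      simp
    have hP0 : P ≠ 0 := by
      intro h
      have h1 : P.eval 1 = (K.card : ℂ) := by
        rw [hPeval]; simp
      rw [h] at h1
      have h2 : (K.card : ℂ) = 0 := by simpa using h1.symm
      have h3 : K.card = 0 := Nat.cast_eq_zero.mp h2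
      omega
    have hPx : (Polynomial.aeval shiftE P) x = 0 := by
      funext n
      have h1 : (Polynomial.aeval shiftE P) x n = ∑ s ∈ K, x (n + (s : ℤ)) := by
        rw [hP, map_sum, LinearMap.sum_apply, Finset.sum_apply]
        refine Finset.sum_congr rfl fun s _ => ?_
        rw [Polynomial.aeval_X_pow, shiftE_pow]
      rw [h1, hrec n]
      rfl
    have hroots : ∀ z ∈ P.roots, ‖z‖ ≠ 1 := by
      intro z hz h1
      have h2 : P.eval z = 0 := Polynomial.isRoot_of_mem_roots hz
      rw [hPeval] at h2
      exact hroot z h1 h2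
    have hfact := Polynomial.Splits.eq_prod_roots
      (IsAlgClosed.splits P)
    have hc : P.leadingCoeff ≠ 0 := Polynomial.leadingCoeff_ne_zero.mpr hP0
    have h2 : (Polynomial.aeval shiftE ((P.roots.map (fun z => X - C z)).prod)) x = 0 := by
      have h3 := hPx
      rw [hfact, map_mul, Polynomial.aeval_C, Module.End.mul_apply,
        Module.algebraMap_end_apply] at h3
      rcases smul_eq_zero.mp h3 with h | h
      · exact absurd h hc
      · exact h
    exact hx0 (kill P.roots hroots x ⟨M, hM⟩ h2)
  · rintro ⟨z, hz1, hzs⟩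
    have hz0 : z ≠ 0 := by
      intro h
      rw [h] at hz1
      simp at hz1
    refine ⟨fun n => z ^ n, ?_, ⟨1, ?_⟩, ?_⟩
    · intro h
      have := congr_fun h 0
      simp at this
    · intro n
      rw [norm_zpow, hz1, one_zpow]
    · intro n
      have h1 : ∀ s ∈ K, z ^ (n + (s : ℤ)) = z ^ n * z ^ s := by
        intro s _
        rw [zpow_add₀ hz0, zpow_natCast]
      rw [Finset.sum_congr rfl h1, ← Finset.mul_sum, hzs, mul_zero]
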